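/- Let H₁ and H₂ be complex Hilbert spaces, let A ⊆ B(H₁) and B ⊆ B(H₂) be norm-closed subalgebras, and let φ : A → B be a surjective isometric algebra isomorphism (a bijective linear multiplicative map with ‖φ(a)‖ = ‖a‖ for all a ∈ A). Then φ maps diag A onto diag B, and φ restricted to diag A is a *-isomorphism; that is, for every a ∈ A with a* ∈ A one has φ(a)* ∈ B and φ(a*) = φ(a)*. -/

import Mathlib

set_option maxHeartbeats 1600000
set_option synthInstance.maxHeartbeats 400000

noncomputable section

/-- The diagonal `diag A := A ∩ A*` of a set of Hilbert-space operators, i.e. the set of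
elements of `A` whose (Hilbert space) adjoint also belongs to `A`. -/
def diagSet {K : Type*} [NormedAddCommGroup K] [InnerProductSpace ℂ K] [CompleteSpace K]
    (A : Set (K →L[ℂ] K)) : Set (K →L[ℂ] K) :=
  {a | a ∈ A ∧ ContinuousLinearMap.adjoint a ∈ A}

open scoped InnerProductSpace ComplexConjugate
open Filter Topology NormedSpace

private lemma mob_aux {H : Type*} [NormedAddCommGroup H] [InnerProductSpace ℂ H]
    (x : H →L[ℂ] H) (hx : ‖x‖ ≤ 1) (l : ℂ) (hl : ‖l‖ ≤ 1) (ξ : H) :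
    ‖(x - l • 1) ξ‖ ≤ ‖((1 : H →L[ℂ] H) - conj l • x) ξ‖ := by
  have hxi : ‖x ξ‖ ≤ ‖ξ‖ := by
    calc ‖x ξ‖ ≤ ‖x‖ * ‖ξ‖ := x.le_opNorm ξ
    _ ≤ 1 * ‖ξ‖ := by gcongr
    _ = ‖ξ‖ := one_mul _
  have e1 : (x - l • 1) ξ = x ξ - l • ξ := by
    simp [ContinuousLinearMap.sub_apply, ContinuousLinearMap.smul_apply]
  have e2 : ((1 : H →L[ℂ] H) - conj l • x) ξ = ξ - conj l • (x ξ) := by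
    simp [ContinuousLinearMap.sub_apply, ContinuousLinearMap.smul_apply]
  rw [e1, e2]
  have sq1 : ‖x ξ - l • ξ‖ ^ 2
      = ‖x ξ‖ ^ 2 - 2 * RCLike.re (l * ⟪x ξ, ξ⟫_ℂ) + ‖l‖ ^ 2 * ‖ξ‖ ^ 2 := by
    rw [@norm_sub_sq ℂ, inner_smul_right, norm_smul]
    ring
  have sq2 : ‖ξ - conj l • x ξ‖ ^ 2
      = ‖ξ‖ ^ 2 - 2 * RCLike.re (l * ⟪x ξ, ξ⟫_ℂ) + ‖l‖ ^ 2 * ‖x ξ‖ ^ 2 := by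
    rw [@norm_sub_sq ℂ, inner_smul_right]
    have h1 : ⟪ξ, x ξ⟫_ℂ = conj ⟪x ξ, ξ⟫_ℂ := (inner_conj_symm ξ (x ξ)).symm
    have h2 : RCLike.re (conj l * ⟪ξ, x ξ⟫_ℂ) = RCLike.re (l * ⟪x ξ, ξ⟫_ℂ) := by
      rw [h1, ← map_mul]
      exact RCLike.conj_re _
    rw [h2, norm_smul, RCLike.norm_conj]
    ring
  have hfac : (0:ℝ) ≤ (1 - ‖l‖ ^ 2) * (‖ξ‖ ^ 2 - ‖x ξ‖ ^ 2) := by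
    apply mul_nonneg
    · nlinarith [norm_nonneg l]
    · nlinarith [norm_nonneg (x ξ)]
  have hsq : ‖x ξ - l • ξ‖ ^ 2 ≤ ‖ξ - conj l • x ξ‖ ^ 2 := by
    rw [sq1, sq2]; nlinarith
  nlinarith [norm_nonneg (x ξ - l • ξ), norm_nonneg (ξ - conj l • x ξ)]

private lemma exp_shift {E : Type*} [NormedRing E] [NormedAlgebra ℂ E] [CompleteSpace E] (X : E) :
    exp X = 1 + ∑' n : ℕ, ((Nat.factorial (n + 1) : ℂ))⁻¹ • X ^ (n + 1) := by
  simp only [exp_eq_tsum (𝕂 := ℂ)]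
  rw [← Summable.sum_add_tsum_nat_add 1 (expSeries_summable' (𝕂 := ℂ) X)]
  simp

section Aux

variable {H₁ H₂ : Type*}
  [NormedAddCommGroup H₁] [InnerProductSpace ℂ H₁] [CompleteSpace H₁]
  [NormedAddCommGroup H₂] [InnerProductSpace ℂ H₂] [CompleteSpace H₂]
  {A : NonUnitalSubalgebra ℂ (H₁ →L[ℂ] H₁)}
  {π : A → (H₂ →L[ℂ] H₂)}

private lemma lemmaM
    (hA : IsClosed (A : Set (H₁ →L[ℂ] H₁)))
    (hadd : ∀ x y : A, π (x + y) = π x + π y)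
    (hsmul : ∀ (c : ℂ) (x : A), π (c • x) = c • π x)
    (hmul : ∀ x y : A, π (x * y) = π x * π y)
    (hc : ∀ x : A, ‖π x‖ ≤ ‖(x : H₁ →L[ℂ] H₁)‖)
    (a : A) (l : ℂ) (hl : ‖l‖ < 1)
    (hxn : ‖l • (1 : H₁ →L[ℂ] H₁) + ↑a‖ ≤ 1) :
    ‖l • (1 : H₂ →L[ℂ] H₂) + π a‖ ≤ 1 := by
  set x : H₁ →L[ℂ] H₁ := l • 1 + ↑a with hxdef
  set z : H₁ →L[ℂ] H₁ := conj l • x with hzdef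
  have hza : ‖z‖ < 1 := by
    rw [hzdef, norm_smul, RCLike.norm_conj]
    calc ‖l‖ * ‖x‖ ≤ ‖l‖ * 1 := by
          apply mul_le_mul_of_nonneg_left hxn (norm_nonneg l)
    _ = ‖l‖ := mul_one _
    _ < 1 := hl
  set u : (H₁ →L[ℂ] H₁)ˣ := Units.oneSub z hza with hudef
  have huval : (u : H₁ →L[ℂ] H₁) = 1 - z := rfl
  have huinv : ((u⁻¹ : (H₁ →L[ℂ] H₁)ˣ) : H₁ →L[ℂ] H₁) = ∑' n : ℕ, z ^ n := rfl
  -- terms a * z^n ∈ A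
  have hterm : ∀ n : ℕ, (↑a : H₁ →L[ℂ] H₁) * z ^ n ∈ A := by
    intro n; induction n with
    | zero => simpa using a.2
    | succ n ih =>
      have heq : (↑a : H₁ →L[ℂ] H₁) * z ^ (n + 1)
          = conj l • (l • ((↑a : H₁ →L[ℂ] H₁) * z ^ n)
            + ((↑a : H₁ →L[ℂ] H₁) * z ^ n) * ↑a) := by
        rw [pow_succ, ← mul_assoc, hzdef, mul_smul_comm, hxdef, mul_add, mul_smul_comm, mul_one]
      rw [heq]
      exact A.smul_mem _ (A.add_mem (A.smul_mem _ ih) (A.mul_mem ih a.2))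
  have hgeom : Summable (fun n : ℕ => z ^ n) := summable_geometric_of_norm_lt_one hza
  have hsumz : Summable (fun n : ℕ => (↑a : H₁ →L[ℂ] H₁) * z ^ n) := hgeom.mul_left _
  set b : H₁ →L[ℂ] H₁ := ∑' n : ℕ, (↑a : H₁ →L[ℂ] H₁) * z ^ n with hbdef
  have hbmul : b = ↑a * ((u⁻¹ : (H₁ →L[ℂ] H₁)ˣ) : H₁ →L[ℂ] H₁) := by
    rw [huinv, hbdef, hgeom.tsum_mul_left]
  have hbA : b ∈ A :=
    hA.mem_of_tendsto hsumz.hasSum.tendsto_sum_nat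
      (Filter.Eventually.of_forall fun n => sum_mem fun i _ => hterm i)
  have hbn : ‖b‖ ≤ 1 := by
    refine ContinuousLinearMap.opNorm_le_bound _ zero_le_one fun ξ => ?_
    rw [one_mul]
    have hax : (↑a : H₁ →L[ℂ] H₁) = x - l • 1 := by rw [hxdef]; abel
    have h1 : b ξ = (x - l • 1) (((u⁻¹ : (H₁ →L[ℂ] H₁)ˣ) : H₁ →L[ℂ] H₁) ξ) := by
      rw [hbmul, hax]; rfl
    rw [h1]
    calc ‖(x - l • 1) (((u⁻¹ : (H₁ →L[ℂ] H₁)ˣ) : H₁ →L[ℂ] H₁) ξ)‖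
        ≤ ‖((1 : H₁ →L[ℂ] H₁) - conj l • x) (((u⁻¹ : (H₁ →L[ℂ] H₁)ˣ) : H₁ →L[ℂ] H₁) ξ)‖ :=
          mob_aux x hxn l hl.le _
      _ = ‖(((u : H₁ →L[ℂ] H₁) * ((u⁻¹ : (H₁ →L[ℂ] H₁)ˣ) : H₁ →L[ℂ] H₁)) ξ)‖ := by
          rw [huval, hzdef]; rfl
      _ = ‖ξ‖ := by rw [u.mul_inv]; simp
  -- the identity a = (1 - conj l * l) • b - conj l • (b * a) in A
  have h2 : b * (1 - z) = ↑a := by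
    rw [hbmul, huval.symm, mul_assoc, u.inv_mul, mul_one]
  have hid : (↑a : H₁ →L[ℂ] H₁) = (1 - conj l * l) • b - conj l • (b * ↑a) := by
    calc (↑a : H₁ →L[ℂ] H₁) = b * (1 - z) := h2.symm
    _ = b - conj l • (b * x) := by rw [mul_sub, mul_one, hzdef, mul_smul_comm]
    _ = (1 - conj l * l) • b - conj l • (b * ↑a) := by
        rw [hxdef, mul_add, mul_smul_comm, mul_one, smul_add, smul_smul, sub_smul, one_smul]
        abel
  set bA : A := ⟨b, hbA⟩ with hbAdef
  have hidA : a = (1 - conj l * l) • bA - conj l • (bA * a) := by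
    apply Subtype.ext
    simpa using hid
  have hsub : ∀ p q : A, π (p - q) = π p - π q := fun p q =>
    eq_sub_of_add_eq (by rw [← hadd, sub_add_cancel])
  have hπa : π a = (1 - conj l * l) • π bA - conj l • (π bA * π a) := by
    conv_lhs => rw [hidA]
    rw [hsub, hsmul, hsmul, hmul]
  set c : H₂ →L[ℂ] H₂ := π bA with hcdef
  have hcn : ‖c‖ ≤ 1 := (hc bA).trans hbn
  have hvlt : ‖-(conj l • c)‖ < 1 := by
    rw [norm_neg, norm_smul, RCLike.norm_conj]
    calc ‖l‖ * ‖c‖ ≤ ‖l‖ * 1 := mul_le_mul_of_nonneg_left hcn (norm_nonneg l)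
    _ = ‖l‖ := mul_one _
    _ < 1 := hl
  set v : (H₂ →L[ℂ] H₂)ˣ := Units.oneSub _ hvlt with hvdef
  have hvval : (v : H₂ →L[ℂ] H₂) = 1 + conj l • c := by
    rw [hvdef, Units.val_oneSub, sub_neg_eq_add]
  have hw : π a + conj l • (c * π a) = (1 - conj l * l) • c :=
    eq_sub_iff_add_eq.mp hπa
  have hmain : ((v : H₂ →L[ℂ] H₂)) * (l • 1 + π a) = c + l • 1 := by
    rw [hvval]
    have expand : ((1 : H₂ →L[ℂ] H₂) + conj l • c) * (l • (1 : H₂ →L[ℂ] H₂) + π a)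
        = l • 1 + (π a + conj l • (c * π a)) + (conj l * l) • c := by
      rw [add_mul, one_mul, smul_mul_assoc, mul_add, mul_smul_comm, mul_one, smul_add, smul_smul]
      abel
    rw [expand, hw, add_assoc, ← add_smul, sub_add_cancel, one_smul]
    abel
  have hcomm : Commute (c + l • 1) ((v : H₂ →L[ℂ] H₂)) := by
    rw [hvval]
    have h1 : Commute c (conj l • c) := (Commute.refl c).smul_right _
    have h3 : Commute c ((1 : H₂ →L[ℂ] H₂) + conj l • c) := (Commute.one_right c).add_right h1
    have h4 : Commute (l • (1 : H₂ →L[ℂ] H₂)) ((1 : H₂ →L[ℂ] H₂) + conj l • c) :=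
      (Commute.one_left _).smul_left l
    exact h3.add_left h4
  have hfinal : l • (1 : H₂ →L[ℂ] H₂) + π a
      = (c + l • 1) * ((v⁻¹ : (H₂ →L[ℂ] H₂)ˣ) : H₂ →L[ℂ] H₂) := by
    calc l • (1 : H₂ →L[ℂ] H₂) + π a
        = ((v⁻¹ : (H₂ →L[ℂ] H₂)ˣ) : H₂ →L[ℂ] H₂) * ((v : H₂ →L[ℂ] H₂) * (l • 1 + π a)) := by
          rw [← mul_assoc, v.inv_mul, one_mul]
    _ = ((v⁻¹ : (H₂ →L[ℂ] H₂)ˣ) : H₂ →L[ℂ] H₂) * (c + l • 1) := by rw [hmain]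
    _ = (c + l • 1) * ((v⁻¹ : (H₂ →L[ℂ] H₂)ˣ) : H₂ →L[ℂ] H₂) :=
          (hcomm.units_inv_right).eq.symm
  refine ContinuousLinearMap.opNorm_le_bound _ zero_le_one fun η => ?_
  rw [one_mul, hfinal]
  have hplus : c + l • (1 : H₂ →L[ℂ] H₂) = c - (-l) • 1 := by rw [neg_smul, sub_neg_eq_add]
  have happ : ((c + l • 1) * ((v⁻¹ : (H₂ →L[ℂ] H₂)ˣ) : H₂ →L[ℂ] H₂)) η
      = (c - (-l) • 1) (((v⁻¹ : (H₂ →L[ℂ] H₂)ˣ) : H₂ →L[ℂ] H₂) η) := by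
    rw [← hplus]; rfl
  rw [happ]
  calc ‖(c - (-l) • 1) (((v⁻¹ : (H₂ →L[ℂ] H₂)ˣ) : H₂ →L[ℂ] H₂) η)‖
      ≤ ‖((1 : H₂ →L[ℂ] H₂) - conj (-l) • c) (((v⁻¹ : (H₂ →L[ℂ] H₂)ˣ) : H₂ →L[ℂ] H₂) η)‖ :=
        mob_aux c hcn (-l) (by rw [norm_neg]; exact hl.le) _
  _ = ‖(v : H₂ →L[ℂ] H₂) (((v⁻¹ : (H₂ →L[ℂ] H₂)ˣ) : H₂ →L[ℂ] H₂) η)‖ := by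
        rw [map_neg, neg_smul, sub_neg_eq_add, ← hvval]
  _ = ‖η‖ := by rw [← ContinuousLinearMap.mul_apply, v.mul_inv]; simp

private lemma lemmaK
    (hA : IsClosed (A : Set (H₁ →L[ℂ] H₁)))
    (hadd : ∀ x y : A, π (x + y) = π x + π y)
    (hsmul : ∀ (c : ℂ) (x : A), π (c • x) = c • π x)
    (hmul : ∀ x y : A, π (x * y) = π x * π y)
    (hc : ∀ x : A, ‖π x‖ ≤ ‖(x : H₁ →L[ℂ] H₁)‖)
    (u : A) (hu : ‖(1 : H₁ →L[ℂ] H₁) + ↑u‖ ≤ 1) :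
    ‖(1 : H₂ →L[ℂ] H₂) + π u‖ ≤ 1 := by
  have key : ∀ r : ℝ, 0 < r → r < 1 → ‖(1 : H₂ →L[ℂ] H₂) + π u‖ ≤ 3 - 2 * r := by
    intro r hr0 hr1
    have h2r : (0:ℝ) < 2 - r := by linarith
    have h2r' : ((2 - r : ℝ) : ℂ) ≠ 0 := by
      simp only [ne_eq, Complex.ofReal_eq_zero]; linarith
    set a : A := (((2 - r : ℝ) : ℂ))⁻¹ • u with hadef
    set l : ℂ := ((r : ℝ) : ℂ) / ((2 - r : ℝ) : ℂ) with hldef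
    have hl : ‖l‖ < 1 := by
      rw [hldef, norm_div]
      simp only [Complex.norm_real, Real.norm_eq_abs]
      rw [abs_of_pos hr0, abs_of_pos h2r, div_lt_one h2r]
      linarith
    -- ‖r•1 + u‖ ≤ 2 - r
    have hbound1 : ‖((r : ℝ) : ℂ) • (1 : H₁ →L[ℂ] H₁) + ↑u‖ ≤ 2 - r := by
      have hsplit : ((r : ℝ) : ℂ) • (1 : H₁ →L[ℂ] H₁) + ↑u
          = ((1 : H₁ →L[ℂ] H₁) + ↑u) - (((1 - r : ℝ) : ℂ)) • 1 := by
        push_cast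
        rw [sub_smul, one_smul]
        abel
      rw [hsplit]
      calc ‖((1 : H₁ →L[ℂ] H₁) + ↑u) - (((1 - r : ℝ) : ℂ)) • 1‖
          ≤ ‖(1 : H₁ →L[ℂ] H₁) + ↑u‖ + ‖(((1 - r : ℝ) : ℂ)) • (1 : H₁ →L[ℂ] H₁)‖ :=
            norm_sub_le _ _
        _ ≤ 1 + (1 - r) * 1 := by
            refine add_le_add hu ?_
            rw [norm_smul, Complex.norm_real, Real.norm_eq_abs, abs_of_nonneg (by linarith)]
            gcongr
            rw [ContinuousLinearMap.one_def]
            exact ContinuousLinearMap.norm_id_le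
        _ = 2 - r := by ring
    have hxn : ‖l • (1 : H₁ →L[ℂ] H₁) + ↑a‖ ≤ 1 := by
      have hcoe : (↑a : H₁ →L[ℂ] H₁) = (((2 - r : ℝ) : ℂ))⁻¹ • (↑u : H₁ →L[ℂ] H₁) := by
        rw [hadef]; rfl
      have : l • (1 : H₁ →L[ℂ] H₁) + ↑a
          = (((2 - r : ℝ) : ℂ))⁻¹ • (((r : ℝ) : ℂ) • (1 : H₁ →L[ℂ] H₁) + ↑u) := by
        rw [hcoe, smul_add, smul_smul, hldef, div_eq_inv_mul]
      rw [this, norm_smul, norm_inv, Complex.norm_real, Real.norm_eq_abs, abs_of_pos h2r]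
      rw [inv_mul_le_iff₀ h2r, mul_one]
      exact hbound1
    have hM := lemmaM hA hadd hsmul hmul hc a l hl hxn
    have hπa : π a = (((2 - r : ℝ) : ℂ))⁻¹ • π u := hsmul _ _
    have himg : l • (1 : H₂ →L[ℂ] H₂) + π a
        = (((2 - r : ℝ) : ℂ))⁻¹ • (((r : ℝ) : ℂ) • (1 : H₂ →L[ℂ] H₂) + π u) := by
      rw [hπa, smul_add, smul_smul, hldef, div_eq_inv_mul]
    rw [himg, norm_smul, norm_inv, Complex.norm_real, Real.norm_eq_abs, abs_of_pos h2r,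
      inv_mul_le_iff₀ h2r, mul_one] at hM
    -- ‖1 + π u‖ ≤ ‖r•1 + π u‖ + (1 - r)
    have hsplit2 : (1 : H₂ →L[ℂ] H₂) + π u
        = (((r : ℝ) : ℂ) • (1 : H₂ →L[ℂ] H₂) + π u) + (((1 - r : ℝ) : ℂ)) • 1 := by
      push_cast
      rw [sub_smul, one_smul]
      abel
    calc ‖(1 : H₂ →L[ℂ] H₂) + π u‖
        ≤ ‖((r : ℝ) : ℂ) • (1 : H₂ →L[ℂ] H₂) + π u‖ + ‖(((1 - r : ℝ) : ℂ)) • (1 : H₂ →L[ℂ] H₂)‖ := by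
          rw [hsplit2]; exact norm_add_le _ _
      _ ≤ (2 - r) + (1 - r) * 1 := by
          refine add_le_add hM ?_
          rw [norm_smul, Complex.norm_real, Real.norm_eq_abs, abs_of_nonneg (by linarith)]
          gcongr
          rw [ContinuousLinearMap.one_def]
          exact ContinuousLinearMap.norm_id_le
      _ = 3 - 2 * r := by ring
  refine le_of_forall_pos_le_add fun ε hε => ?_
  have hmin : 0 < min ε 1 := lt_min hε one_pos
  have := key (1 - min ε 1 / 2) (by simp only [sub_pos]; linarith [min_le_right ε (1:ℝ)]) (by linarith)
  calc ‖(1 : H₂ →L[ℂ] H₂) + π u‖ ≤ 3 - 2 * (1 - min ε 1 / 2) := this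
  _ = 1 + min ε 1 := by ring
  _ ≤ 1 + ε := by linarith [min_le_left ε (1:ℝ)]

private lemma pi_exp
    (hA : IsClosed (A : Set (H₁ →L[ℂ] H₁)))
    (hadd : ∀ x y : A, π (x + y) = π x + π y)
    (hsmul : ∀ (c : ℂ) (x : A), π (c • x) = c • π x)
    (hmul : ∀ x y : A, π (x * y) = π x * π y)
    (hc : ∀ x : A, ‖π x‖ ≤ ‖(x : H₁ →L[ℂ] H₁)‖)
    (w : A) :
    ∃ u : A, ((1 : H₁ →L[ℂ] H₁) + ↑u = exp (w : H₁ →L[ℂ] H₁)) ∧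
      ((1 : H₂ →L[ℂ] H₂) + π u = exp (π w)) := by
  have hpow : ∀ n : ℕ, ((w : H₁ →L[ℂ] H₁)) ^ (n + 1) ∈ A := by
    intro n; induction n with
    | zero => simpa using w.2
    | succ n ih => rw [pow_succ]; exact A.mul_mem ih w.2
  have hs1 : Summable (fun n : ℕ =>
      ((Nat.factorial (n + 1) : ℂ))⁻¹ • ((w : H₁ →L[ℂ] H₁)) ^ (n + 1)) :=
    (summable_nat_add_iff 1).mpr (expSeries_summable' (𝕂 := ℂ) ((w : H₁ →L[ℂ] H₁)))
  have hs2 : Summable (fun n : ℕ => ((Nat.factorial (n + 1) : ℂ))⁻¹ • (π w) ^ (n + 1)) :=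
    (summable_nat_add_iff 1).mpr (expSeries_summable' (𝕂 := ℂ) (π w))
  set u' : H₁ →L[ℂ] H₁ :=
    ∑' n : ℕ, ((Nat.factorial (n + 1) : ℂ))⁻¹ • ((w : H₁ →L[ℂ] H₁)) ^ (n + 1) with hu'def
  have hu'A : u' ∈ A :=
    hA.mem_of_tendsto hs1.hasSum.tendsto_sum_nat
      (Filter.Eventually.of_forall fun N => sum_mem fun i _ => A.smul_mem _ (hpow i))
  set uA : A := ⟨u', hu'A⟩ with huAdef
  refine ⟨uA, ?_, ?_⟩
  · rw [exp_shift]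
  · let Φ : A →ₗ[ℂ] (H₂ →L[ℂ] H₂) :=
      { toFun := π, map_add' := hadd, map_smul' := fun c x => hsmul c x }
    set wpow : ℕ → A := fun n => ⟨((w : H₁ →L[ℂ] H₁)) ^ (n + 1), hpow n⟩ with hwpowdef
    have hπpow : ∀ n : ℕ, π (wpow n) = (π w) ^ (n + 1) := by
      intro n; induction n with
      | zero =>
        have h0 : wpow 0 = w := Subtype.ext (pow_one _)
        rw [h0, pow_one]
      | succ n ih =>
        have hstep : wpow (n + 1) = wpow n * w := Subtype.ext (by
          show ((w : H₁ →L[ℂ] H₁)) ^ (n + 1 + 1) = _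
          rw [pow_succ]; rfl)
        rw [hstep, hmul, ih, ← pow_succ]
    set σ : ℕ → A := fun N =>
      ∑ n ∈ Finset.range N, ((Nat.factorial (n + 1) : ℂ))⁻¹ • wpow n with hσdef
    have hσcoe : ∀ N, ((σ N : A) : H₁ →L[ℂ] H₁)
        = ∑ n ∈ Finset.range N, ((Nat.factorial (n + 1) : ℂ))⁻¹ • ((w : H₁ →L[ℂ] H₁)) ^ (n + 1) := by
      intro N
      rw [hσdef]
      push_cast
      rfl
    have hπσ : ∀ N, π (σ N)
        = ∑ n ∈ Finset.range N, ((Nat.factorial (n + 1) : ℂ))⁻¹ • (π w) ^ (n + 1) := by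
      intro N
      calc π (σ N) = Φ (σ N) := rfl
      _ = ∑ n ∈ Finset.range N, ((Nat.factorial (n + 1) : ℂ))⁻¹ • Φ (wpow n) := by
          rw [hσdef, map_sum]
          exact Finset.sum_congr rfl fun n _ => Φ.map_smul _ _
      _ = _ := Finset.sum_congr rfl fun n _ => by rw [show Φ (wpow n) = π (wpow n) from rfl, hπpow]
    have hsub : ∀ p q : A, π (p - q) = π p - π q := fun p q =>
      eq_sub_of_add_eq (by rw [← hadd, sub_add_cancel])
    have hbound : ∀ N, ‖π (σ N) - π uA‖ ≤ ‖((σ N : A) : H₁ →L[ℂ] H₁) - u'‖ := by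
      intro N
      rw [← hsub]
      refine (hc _).trans (le_of_eq ?_)
      push_cast
      rfl
    have hcoe_tend : Tendsto (fun N => ‖((σ N : A) : H₁ →L[ℂ] H₁) - u'‖) atTop (𝓝 0) := by
      have h1 := hs1.hasSum.tendsto_sum_nat
      rw [tendsto_iff_norm_sub_tendsto_zero] at h1
      convert h1 using 2 with N
      rw [hσcoe]
    have htend : Tendsto (fun N => π (σ N)) atTop (𝓝 (π uA)) := by
      rw [tendsto_iff_norm_sub_tendsto_zero]
      exact squeeze_zero (fun N => norm_nonneg _) hbound hcoe_tend
    have htend2 : Tendsto (fun N => π (σ N)) atTop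
        (𝓝 (∑' n : ℕ, ((Nat.factorial (n + 1) : ℂ))⁻¹ • (π w) ^ (n + 1))) := by
      have h2 := hs2.hasSum.tendsto_sum_nat
      convert h2 using 2 with N
      rw [hπσ]
    have := tendsto_nhds_unique htend htend2
    rw [exp_shift (π w), this]

private lemma sa_map
    (hA : IsClosed (A : Set (H₁ →L[ℂ] H₁)))
    (hadd : ∀ x y : A, π (x + y) = π x + π y)
    (hsmul : ∀ (c : ℂ) (x : A), π (c • x) = c • π x)
    (hmul : ∀ x y : A, π (x * y) = π x * π y)
    (hc : ∀ x : A, ‖π x‖ ≤ ‖(x : H₁ →L[ℂ] H₁)‖)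
    (h : A) (hsa : IsSelfAdjoint ((h : H₁ →L[ℂ] H₁))) :
    IsSelfAdjoint (π h) := by
  set k : H₂ →L[ℂ] H₂ := π h with hkdef
  -- Step 1: for all real t, ‖exp ℂ (((t:ℂ) * I) • k)‖ ≤ 1
  have hexp_bound : ∀ t : ℝ, ‖exp ((((t : ℝ) : ℂ) * Complex.I) • k)‖ ≤ 1 := by
    intro t
    set g : A := (((t : ℝ) : ℂ) * Complex.I) • h with hgdef
    have hπg : π g = (((t : ℝ) : ℂ) * Complex.I) • k := hsmul _ _
    have hgcoe : ((g : A) : H₁ →L[ℂ] H₁) = (((t : ℝ) : ℂ) * Complex.I) • (h : H₁ →L[ℂ] H₁) := rfl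
    have hskew : star ((g : A) : H₁ →L[ℂ] H₁) = -((g : A) : H₁ →L[ℂ] H₁) := by
      rw [hgcoe, star_smul, hsa.star_eq]
      rw [← neg_smul]
      congr 1
      simp [Complex.ext_iff]
    have hunit : ‖exp ((g : A) : H₁ →L[ℂ] H₁)‖ ≤ 1 := by
      have hcom : Commute (-((g : A) : H₁ →L[ℂ] H₁)) ((g : A) : H₁ →L[ℂ] H₁) :=
        (Commute.refl _).neg_left
      have h1 : star (exp ((g : A) : H₁ →L[ℂ] H₁)) * exp ((g : A) : H₁ →L[ℂ] H₁)
          = 1 := by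
        rw [star_exp, hskew, ← exp_add_of_commute_of_mem_ball (𝕂 := ℂ) hcom
          ((expSeries_radius_eq_top ℂ (H₁ →L[ℂ] H₁)).symm ▸ edist_lt_top _ _)
          ((expSeries_radius_eq_top ℂ (H₁ →L[ℂ] H₁)).symm ▸ edist_lt_top _ _), neg_add_cancel, exp_zero]
      have h2 : ‖exp ((g : A) : H₁ →L[ℂ] H₁)‖ * ‖exp ((g : A) : H₁ →L[ℂ] H₁)‖
          = ‖(1 : H₁ →L[ℂ] H₁)‖ := by
        rw [← CStarRing.norm_star_mul_self, h1]
      have h3 : ‖(1 : H₁ →L[ℂ] H₁)‖ ≤ 1 := by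
        rw [ContinuousLinearMap.one_def]; exact ContinuousLinearMap.norm_id_le
      nlinarith [norm_nonneg (exp ((g : A) : H₁ →L[ℂ] H₁))]
    obtain ⟨u, hu1, hu2⟩ := pi_exp hA hadd hsmul hmul hc g
    have := lemmaK hA hadd hsmul hmul hc u (by rw [hu1]; exact hunit)
    rw [hu2, hπg] at this
    exact this
  -- Step 2: derivative argument
  have hsym : ∀ ξ : H₂, (starRingEnd ℂ) ⟪k ξ, ξ⟫_ℂ = ⟪k ξ, ξ⟫_ℂ := by
    intro ξ
    set m : H₂ →L[ℂ] H₂ := Complex.I • k with hmdef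
    have hbnd : ∀ t : ℝ, ‖exp (((t : ℝ) : ℂ) • m)‖ ≤ 1 := by
      intro t
      have : (((t : ℝ) : ℂ)) • m = (((t : ℝ) : ℂ) * Complex.I) • k := by
        rw [hmdef, smul_smul]
      rw [this]
      exact hexp_bound t
    set F : ℝ → H₂ := fun t => (exp (((t : ℝ) : ℂ) • m)) ξ with hFdef
    have hF0 : F 0 = ξ := by simp [hFdef]
    have hDop : HasDerivAt (fun t : ℝ => exp (((t : ℝ) : ℂ) • m)) m 0 := by
      have h0 : HasDerivAt (fun z : ℂ => exp (z • m)) (exp (((0 : ℝ) : ℂ) • m) * m)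
          (((0 : ℝ) : ℂ)) := hasDerivAt_exp_smul_const m _
      have h0' : HasDerivAt (fun z : ℂ => exp (z • m)) (exp (((0 : ℝ) : ℂ) • m) * m)
          (Complex.ofRealCLM (0 : ℝ)) := h0
      have h1 := HasDerivAt.scomp (x := (0:ℝ)) h0' Complex.ofRealCLM.hasDerivAt
      simpa [Function.comp_def] using h1
    have hDF : HasDerivAt F (m ξ) 0 := by
      have hev := (((ContinuousLinearMap.apply ℂ H₂ ξ).restrictScalars
        ℝ).hasFDerivAt.comp_hasDerivAt 0 hDop)
      simpa [hFdef, Function.comp_def] using hev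
    have hDinner : HasDerivAt (fun t => RCLike.re (⟪F t, F t⟫_ℂ))
        (RCLike.re (⟪F 0, m ξ⟫_ℂ + ⟪m ξ, F 0⟫_ℂ)) 0 := by
      have hi := hDF.inner ℂ hDF
      exact (RCLike.reCLM.hasFDerivAt.comp_hasDerivAt 0 hi)
    have hmax : IsLocalMax (fun t => RCLike.re (⟪F t, F t⟫_ℂ)) 0 := by
      apply Filter.Eventually.of_forall
      intro t
      have h1 : RCLike.re (⟪F t, F t⟫_ℂ) = ‖F t‖ ^ 2 := inner_self_eq_norm_sq (𝕜 := ℂ) _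
      have h2 : RCLike.re (⟪F 0, F 0⟫_ℂ) = ‖F 0‖ ^ 2 := inner_self_eq_norm_sq (𝕜 := ℂ) _
      simp only [h1, h2]
      rw [hF0]
      have : ‖F t‖ ≤ ‖ξ‖ := by
        calc ‖F t‖ ≤ ‖exp (((t : ℝ) : ℂ) • m)‖ * ‖ξ‖ := ContinuousLinearMap.le_opNorm _ _
        _ ≤ 1 * ‖ξ‖ := mul_le_mul_of_nonneg_right (hbnd t) (norm_nonneg _)
        _ = ‖ξ‖ := one_mul _
      have h0 : (0:ℝ) ≤ ‖F t‖ := norm_nonneg _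
      nlinarith
    have hzero : RCLike.re (⟪F 0, m ξ⟫_ℂ + ⟪m ξ, F 0⟫_ℂ) = 0 :=
      hmax.hasDerivAt_eq_zero hDinner
    rw [hF0] at hzero
    -- re(⟪ξ, mξ⟫ + ⟪mξ, ξ⟫) = 2 re ⟪ξ, mξ⟫
    have hre : RCLike.re (⟪ξ, m ξ⟫_ℂ) = 0 := by
      have hconj : ⟪m ξ, ξ⟫_ℂ = (starRingEnd ℂ) ⟪ξ, m ξ⟫_ℂ := (inner_conj_symm _ _).symm
      rw [map_add, hconj] at hzero
      have : RCLike.re ((starRingEnd ℂ) ⟪ξ, m ξ⟫_ℂ) = RCLike.re (⟪ξ, m ξ⟫_ℂ) :=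
        RCLike.conj_re _
      rw [this] at hzero
      linarith
    -- m ξ = I • (k ξ), so re (I * ⟪ξ, k ξ⟫) = 0, i.e. im ⟪ξ, k ξ⟫ = 0
    have him : (⟪ξ, k ξ⟫_ℂ).im = 0 := by
      have : ⟪ξ, m ξ⟫_ℂ = Complex.I * ⟪ξ, k ξ⟫_ℂ := by
        rw [hmdef]
        have : m ξ = Complex.I • (k ξ) := rfl
        rw [this, inner_smul_right]
      rw [this] at hre
      simpa [Complex.mul_re] using hre
    have hkconj : ⟪k ξ, ξ⟫_ℂ = (starRingEnd ℂ) ⟪ξ, k ξ⟫_ℂ := (inner_conj_symm _ _).symm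
    rw [Complex.conj_eq_iff_im, hkconj, Complex.conj_im, him, neg_zero]
  have hsymm : (k : H₂ →ₗ[ℂ] H₂).IsSymmetric :=
    (LinearMap.isSymmetric_iff_inner_map_self_real _).mpr hsym
  exact ContinuousLinearMap.isSelfAdjoint_iff_isSymmetric.mpr hsymm

private lemma key_adj
    (hA : IsClosed (A : Set (H₁ →L[ℂ] H₁)))
    (hadd : ∀ x y : A, π (x + y) = π x + π y)
    (hsmul : ∀ (c : ℂ) (x : A), π (c • x) = c • π x)
    (hmul : ∀ x y : A, π (x * y) = π x * π y)
    (hc : ∀ x : A, ‖π x‖ ≤ ‖(x : H₁ →L[ℂ] H₁)‖)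
    (x y : A) (hy : (y : H₁ →L[ℂ] H₁) = ContinuousLinearMap.adjoint (x : H₁ →L[ℂ] H₁)) :
    ContinuousLinearMap.adjoint (π x) = π y := by
  have hstar_x : star (x : H₁ →L[ℂ] H₁) = ↑y := by
    rw [ContinuousLinearMap.star_eq_adjoint, hy]
  have hstar_y : star (y : H₁ →L[ℂ] H₁) = ↑x := by
    rw [ContinuousLinearMap.star_eq_adjoint, hy, ContinuousLinearMap.adjoint_adjoint]
  set h : A := (2 : ℂ)⁻¹ • (x + y) with hhdef
  set k : A := (2 * Complex.I)⁻¹ • (x - y) with hkdef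
  have hcoe_h : ((h : A) : H₁ →L[ℂ] H₁) = (2 : ℂ)⁻¹ • ((x : H₁ →L[ℂ] H₁) + ↑y) := rfl
  have hcoe_k : ((k : A) : H₁ →L[ℂ] H₁) = (2 * Complex.I)⁻¹ • ((x : H₁ →L[ℂ] H₁) - ↑y) := rfl
  have hsa_h : IsSelfAdjoint ((h : A) : H₁ →L[ℂ] H₁) := by
    rw [IsSelfAdjoint, hcoe_h, star_smul, star_add, hstar_x, hstar_y]
    have h2 : star (2 : ℂ)⁻¹ = (2 : ℂ)⁻¹ := by rw [Complex.star_def, map_inv₀, map_ofNat]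
    rw [h2, add_comm]
  have hsa_k : IsSelfAdjoint ((k : A) : H₁ →L[ℂ] H₁) := by
    rw [IsSelfAdjoint, hcoe_k, star_smul, star_sub, hstar_x, hstar_y]
    have h2 : star ((2 : ℂ) * Complex.I)⁻¹ = -((2 : ℂ) * Complex.I)⁻¹ := by
      rw [Complex.star_def, map_inv₀, map_mul, Complex.conj_I]
      rw [show (starRingEnd ℂ) 2 = 2 from map_ofNat _ 2]
      rw [mul_neg, inv_neg]
    rw [h2, neg_smul, ← smul_neg, neg_sub]
  have hIk : Complex.I * (2 * Complex.I)⁻¹ = (2 : ℂ)⁻¹ := by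
    field_simp
  have hx_eq : x = h + Complex.I • k := by
    rw [hhdef, hkdef, smul_smul, hIk, ← smul_add]
    have hxx : (x + y) + (x - y) = (2 : ℂ) • x := by
      rw [two_smul ℂ]; abel
    rw [hxx, smul_smul, inv_mul_cancel₀ (two_ne_zero), one_smul]
  have hy_eq : y = h - Complex.I • k := by
    rw [hhdef, hkdef, smul_smul, hIk, ← smul_sub]
    have hyy : (x + y) - (x - y) = (2 : ℂ) • y := by
      rw [two_smul ℂ]; abel
    rw [hyy, smul_smul, inv_mul_cancel₀ (two_ne_zero), one_smul]
  have hsub : ∀ p q : A, π (p - q) = π p - π q := fun p q =>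
    eq_sub_of_add_eq (by rw [← hadd, sub_add_cancel])
  have sh := sa_map hA hadd hsmul hmul hc h hsa_h
  have sk := sa_map hA hadd hsmul hmul hc k hsa_k
  rw [← ContinuousLinearMap.star_eq_adjoint]
  have hπx : π x = π h + Complex.I • π k := by
    conv_lhs => rw [hx_eq]
    rw [hadd, hsmul, hsmul]
  have hπy : π y = π h - Complex.I • π k := by
    conv_lhs => rw [hy_eq]
    rw [hsub, hsmul, hsmul]
  rw [hπx, hπy, star_add, star_smul, sh.star_eq, sk.star_eq, Complex.star_def,
    Complex.conj_I, neg_smul, ← sub_eq_add_neg]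

end Aux

/-- If `φ : A → B` is a surjective isometric algebra isomorphism between
norm-closed subalgebras of `B(H₁)` and `B(H₂)`, then `φ` maps `diag A` onto `diag B` and the
restriction of `φ` to `diag A` is a `*`-isomorphism: for every `a ∈ A` with `a* ∈ A` one has
`φ(a)* ∈ B` and `φ(a*) = φ(a)*`. -/
theorem stable_iso_stmt0
    {H₁ H₂ : Type*}
    [NormedAddCommGroup H₁] [InnerProductSpace ℂ H₁] [CompleteSpace H₁]
    [NormedAddCommGroup H₂] [InnerProductSpace ℂ H₂] [CompleteSpace H₂]
    (A : NonUnitalSubalgebra ℂ (H₁ →L[ℂ] H₁)) (B : NonUnitalSubalgebra ℂ (H₂ →L[ℂ] H₂))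
    (hA : IsClosed (A : Set (H₁ →L[ℂ] H₁))) (hB : IsClosed (B : Set (H₂ →L[ℂ] H₂)))
    (φ : A → B) (hbij : Function.Bijective φ)
    (hadd : ∀ x y : A, (↑(φ (x + y)) : H₂ →L[ℂ] H₂) = ↑(φ x) + ↑(φ y))
    (hsmul : ∀ (c : ℂ) (x : A), (↑(φ (c • x)) : H₂ →L[ℂ] H₂) = c • (↑(φ x) : H₂ →L[ℂ] H₂))
    (hmul : ∀ x y : A, (↑(φ (x * y)) : H₂ →L[ℂ] H₂) = ↑(φ x) * ↑(φ y))
    (hiso : ∀ x : A, ‖(↑(φ x) : H₂ →L[ℂ] H₂)‖ = ‖(↑x : H₁ →L[ℂ] H₁)‖) :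
    ((fun x : A => (↑(φ x) : H₂ →L[ℂ] H₂)) ''
        {x : A | (↑x : H₁ →L[ℂ] H₁) ∈ diagSet (A : Set (H₁ →L[ℂ] H₁))} =
      diagSet (B : Set (H₂ →L[ℂ] H₂))) ∧
    (∀ x y : A, (↑x : H₁ →L[ℂ] H₁) ∈ diagSet (A : Set (H₁ →L[ℂ] H₁)) →
      (↑y : H₁ →L[ℂ] H₁) = ContinuousLinearMap.adjoint (↑x : H₁ →L[ℂ] H₁) →
      (↑(φ y) : H₂ →L[ℂ] H₂) = ContinuousLinearMap.adjoint (↑(φ x) : H₂ →L[ℂ] H₂)) := by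
  -- the forward map π
  set π : A → (H₂ →L[ℂ] H₂) := fun x => (↑(φ x) : H₂ →L[ℂ] H₂) with hπdef
  have hc : ∀ x : A, ‖π x‖ ≤ ‖(x : H₁ →L[ℂ] H₁)‖ := fun x => le_of_eq (hiso x)
  have hkey : ∀ x y : A, (↑y : H₁ →L[ℂ] H₁) = ContinuousLinearMap.adjoint (↑x : H₁ →L[ℂ] H₁) →
      ContinuousLinearMap.adjoint (π x) = π y :=
    fun x y hy => key_adj hA hadd hsmul hmul hc x y hy
  -- the inverse map
  set e : A ≃ B := Equiv.ofBijective φ hbij with hedef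
  have heφ : ∀ x : A, e x = φ x := fun x => rfl
  have heφ' : ∀ b : B, φ (e.symm b) = b := fun b => by
    rw [← heφ, Equiv.apply_symm_apply]
  set ψ : B → (H₁ →L[ℂ] H₁) := fun b => (↑(e.symm b) : H₁ →L[ℂ] H₁) with hψdef
  have hsymm_eq : ∀ (b : B) (a : A), (↑(φ a) : H₂ →L[ℂ] H₂) = ↑b → e.symm b = a := by
    intro b a hba
    have : φ a = b := Subtype.ext hba
    rw [← this, ← heφ, Equiv.symm_apply_apply]
  have hadd' : ∀ u v : B, ψ (u + v) = ψ u + ψ v := by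
    intro u v
    have : e.symm (u + v) = e.symm u + e.symm v := by
      apply hsymm_eq
      rw [hadd, heφ', heφ']
      push_cast
      rfl
    rw [hψdef]; simp only [this]; push_cast; rfl
  have hsmul' : ∀ (c : ℂ) (u : B), ψ (c • u) = c • ψ u := by
    intro c u
    have : e.symm (c • u) = c • e.symm u := by
      apply hsymm_eq
      rw [hsmul, heφ']
      push_cast
      rfl
    rw [hψdef]; simp only [this]; push_cast; rfl
  have hmul' : ∀ u v : B, ψ (u * v) = ψ u * ψ v := by
    intro u v
    have : e.symm (u * v) = e.symm u * e.symm v := by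
      apply hsymm_eq
      rw [hmul, heφ', heφ']
      push_cast
      rfl
    rw [hψdef]; simp only [this]; push_cast; rfl
  have hc' : ∀ u : B, ‖ψ u‖ ≤ ‖(u : H₂ →L[ℂ] H₂)‖ := by
    intro u
    have := hiso (e.symm u)
    rw [heφ' u] at this
    rw [hψdef]
    exact le_of_eq this.symm
  have hkey' : ∀ u v : B, (↑v : H₂ →L[ℂ] H₂) = ContinuousLinearMap.adjoint (↑u : H₂ →L[ℂ] H₂) →
      ContinuousLinearMap.adjoint (ψ u) = ψ v :=
    fun u v hv => key_adj hB hadd' hsmul' hmul' hc' u v hv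
  constructor
  · apply Set.eq_of_subset_of_subset
    · rintro b ⟨x, hx, rfl⟩
      obtain ⟨hx1, hx2⟩ := hx
      refine ⟨(φ x).2, ?_⟩
      rw [hkey x ⟨_, hx2⟩ rfl]
      exact (φ ⟨_, hx2⟩).2
    · rintro b ⟨hb1, hb2⟩
      refine ⟨e.symm ⟨b, hb1⟩, ?_, ?_⟩
      · constructor
        · exact (e.symm ⟨b, hb1⟩).2
        · have := hkey' ⟨b, hb1⟩ ⟨_, hb2⟩ rfl
          rw [hψdef] at this
          simp only at this
          rw [this]
          exact (e.symm ⟨_, hb2⟩).2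
      · show (↑(φ (e.symm ⟨b, hb1⟩)) : H₂ →L[ℂ] H₂) = b
        rw [heφ' ⟨b, hb1⟩]
  · intro x y hx hy
    exact (hkey x y hy).symm
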